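/- Fix real numbers m and λ. On the set G = ℝ × ℝ × SO(2) × ℝ × ℝ² × ℝ², with elements g = (θ, φ, R, b, v, a), define the multiplication (θ, φ, R, b, v, a)(θ′, φ′, R′, b′, v′, a′) = (θ + θ′ + (m/2)(a·Rv′ − v·Ra′ + b′ v·Rv′), φ + φ′ + (λ/2)(v ∧ Rv′), RR′, b + b′, v + Rv′, a + Ra′ + v b′), where u ∧ w = u₁w₂ − u₂w₁ for u, w ∈ ℝ². Then this multiplication is associative, has identity (0, 0, I₂, 0, 0, 0), and every element has a two-sided inverse; i.e., G is a group (the two-fold centrally extended (2+1)-Galilei group). -/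

import Mathlib

noncomputable section

/-- `SO(2)`: 2×2 real orthogonal matrices of determinant 1. -/
abbrev SO2 := Matrix.specialOrthogonalGroup (Fin 2) ℝ

/-- The underlying set of the two-fold centrally extended (2+1)-Galilei group:
elements `(θ, φ, R, b, v, a)`. -/
abbrev GalExt := ℝ × ℝ × SO2 × ℝ × (Fin 2 → ℝ) × (Fin 2 → ℝ)

/-- Euclidean dot product on ℝ². -/
def dot (u w : Fin 2 → ℝ) : ℝ := u 0 * w 0 + u 1 * w 1

/-- Wedge product on ℝ²: `u ∧ w = u₁w₂ − u₂w₁`. -/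
def wedge (u w : Fin 2 → ℝ) : ℝ := u 0 * w 1 - u 1 * w 0

/-- The multiplication law of the two-fold centrally extended (2+1)-Galilei group,
with extension (cocycle) parameters `m` and `λ`. -/
def galMul (m lam : ℝ) (g g' : GalExt) : GalExt :=
  let θ := g.1; let φ := g.2.1; let R := g.2.2.1; let b := g.2.2.2.1
  let v := g.2.2.2.2.1; let a := g.2.2.2.2.2
  let θ' := g'.1; let φ' := g'.2.1; let R' := g'.2.2.1; let b' := g'.2.2.2.1
  let v' := g'.2.2.2.2.1; let a' := g'.2.2.2.2.2
  (θ + θ' + (m / 2) * (dot a (R.1.mulVec v') - dot v (R.1.mulVec a')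
      + b' * dot v (R.1.mulVec v')),
   φ + φ' + (lam / 2) * wedge v (R.1.mulVec v'),
   R * R', b + b', v + R.1.mulVec v', a + R.1.mulVec a' + b' • v)

/-- The identity element `(0, 0, I₂, 0, 0, 0)`. -/
def galOne : GalExt := (0, 0, 1, 0, 0, 0)

/-! ### Auxiliary lemmas -/

lemma so2_col1 (R : SO2) : R.1 0 0 * R.1 0 0 + R.1 1 0 * R.1 1 0 = 1 := by
  have h := R.2.1.1
  have := congrFun (congrFun h 0) 0
  simpa [Matrix.mul_apply, Fin.sum_univ_two, Matrix.star_eq_conjTranspose,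
    Matrix.conjTranspose_apply, Matrix.one_apply] using this

lemma so2_col2 (R : SO2) : R.1 0 1 * R.1 0 1 + R.1 1 1 * R.1 1 1 = 1 := by
  have h := R.2.1.1
  have := congrFun (congrFun h 1) 1
  simpa [Matrix.mul_apply, Fin.sum_univ_two, Matrix.star_eq_conjTranspose,
    Matrix.conjTranspose_apply, Matrix.one_apply] using this

lemma so2_col12 (R : SO2) : R.1 0 0 * R.1 0 1 + R.1 1 0 * R.1 1 1 = 0 := by
  have h := R.2.1.1
  have := congrFun (congrFun h 0) 1
  simpa [Matrix.mul_apply, Fin.sum_univ_two, Matrix.star_eq_conjTranspose,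
    Matrix.conjTranspose_apply, Matrix.one_apply] using this

lemma so2_det (R : SO2) : R.1 0 0 * R.1 1 1 - R.1 0 1 * R.1 1 0 = 1 := by
  have h : R.1.det = 1 := R.2.2
  rwa [Matrix.det_fin_two] at h

lemma dot_rot (R : SO2) (u w : Fin 2 → ℝ) :
    dot (R.1.mulVec u) (R.1.mulVec w) = dot u w := by
  have h1 := so2_col1 R
  have h2 := so2_col2 R
  have h3 := so2_col12 R
  simp only [dot, Matrix.mulVec, dotProduct, Fin.sum_univ_two]
  linear_combination u 0 * w 0 * h1 + u 1 * w 1 * h2 + (u 0 * w 1 + u 1 * w 0) * h3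

lemma wedge_rot (R : SO2) (u w : Fin 2 → ℝ) :
    wedge (R.1.mulVec u) (R.1.mulVec w) = wedge u w := by
  have hd := so2_det R
  simp only [wedge, Matrix.mulVec, dotProduct, Fin.sum_univ_two]
  linear_combination (u 0 * w 1 - u 1 * w 0) * hd

lemma dot_add_left (u v w : Fin 2 → ℝ) : dot (u + v) w = dot u w + dot v w := by
  simp [dot]; ring

lemma dot_add_right (u v w : Fin 2 → ℝ) : dot u (v + w) = dot u v + dot u w := by
  simp [dot]; ring

lemma dot_smul_left (c : ℝ) (u w : Fin 2 → ℝ) : dot (c • u) w = c * dot u w := by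
  simp [dot]; ring

lemma dot_smul_right (c : ℝ) (u w : Fin 2 → ℝ) : dot u (c • w) = c * dot u w := by
  simp [dot]; ring

lemma wedge_add_left (u v w : Fin 2 → ℝ) : wedge (u + v) w = wedge u w + wedge v w := by
  simp [wedge]; ring

lemma wedge_add_right (u v w : Fin 2 → ℝ) : wedge u (v + w) = wedge u v + wedge u w := by
  simp [wedge]; ring

lemma dot_zero_right (u : Fin 2 → ℝ) : dot u 0 = 0 := by simp [dot]

lemma wedge_zero_right (u : Fin 2 → ℝ) : wedge u 0 = 0 := by simp [wedge]

/-- The inverse rotation in `SO(2)`, given by the transpose. -/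
def so2Inv (R : SO2) : SO2 :=
  ⟨star R.1,
   ⟨⟨by rw [star_star]; exact R.2.1.2, by rw [star_star]; exact R.2.1.1⟩,
    by
      have h : R.1.det = 1 := R.2.2
      show (star R.1).det = 1
      rw [Matrix.star_eq_conjTranspose, Matrix.det_conjTranspose, h, star_one]⟩⟩

lemma so2Inv_mul (R : SO2) : so2Inv R * R = 1 := by
  apply Subtype.ext
  exact R.2.1.1

lemma mul_so2Inv (R : SO2) : R * so2Inv R = 1 := by
  apply Subtype.ext
  exact R.2.1.2

lemma mulVec_so2Inv (R : SO2) (x : Fin 2 → ℝ) :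
    R.1.mulVec ((so2Inv R).1.mulVec x) = x := by
  rw [Matrix.mulVec_mulVec]
  show (R.1 * star R.1).mulVec x = x
  rw [R.2.1.2, Matrix.one_mulVec]

lemma so2Inv_mulVec (R : SO2) (x : Fin 2 → ℝ) :
    (so2Inv R).1.mulVec (R.1.mulVec x) = x := by
  rw [Matrix.mulVec_mulVec]
  show (star R.1 * R.1).mulVec x = x
  rw [R.2.1.1, Matrix.one_mulVec]

/-- The multiplication of the two-fold centrally extended (2+1)-Galilei group is
associative, has `(0, 0, I₂, 0, 0, 0)` as a two-sided identity, and every element has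
a two-sided inverse; i.e., it makes `ℝ × ℝ × SO(2) × ℝ × ℝ² × ℝ²` into a group. -/
theorem galExt_is_group (m lam : ℝ) :
    (∀ g g' g'' : GalExt, galMul m lam (galMul m lam g g') g''
        = galMul m lam g (galMul m lam g' g'')) ∧
    (∀ g : GalExt, galMul m lam galOne g = g ∧ galMul m lam g galOne = g) ∧
    (∀ g : GalExt, ∃ h : GalExt,
        galMul m lam g h = galOne ∧ galMul m lam h g = galOne) := by
  refine ⟨?_, ?_, ?_⟩
  · rintro ⟨θ, φ, R, b, v, a⟩ ⟨θ', φ', R', b', v', a'⟩ ⟨θ'', φ'', R'', b'', v'', a''⟩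
    simp only [galMul, Prod.mk.injEq, Submonoid.coe_mul, ← Matrix.mulVec_mulVec,
      Matrix.mulVec_add, Matrix.mulVec_smul]
    refine ⟨?_, ?_, mul_assoc .., by ring, ?_, ?_⟩
    · simp only [dot_add_left, dot_add_right, dot_smul_left, dot_smul_right, dot_rot]
      ring
    · simp only [wedge_add_left, wedge_add_right, wedge_rot]
      ring
    · simp only [add_assoc]
    · funext i
      simp only [Pi.add_apply, Pi.smul_apply, smul_eq_mul]
      ring
  · rintro ⟨θ, φ, R, b, v, a⟩
    constructor <;>
      simp [galMul, galOne, dot_zero_right, wedge_zero_right, dot, wedge,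
        Matrix.one_mulVec, Matrix.mulVec_zero, Prod.ext_iff]
  · rintro ⟨θ, φ, R, b, v, a⟩
    refine ⟨(-θ, -φ, so2Inv R, -b, -(so2Inv R).1.mulVec v,
      (so2Inv R).1.mulVec (b • v - a)), ?_, ?_⟩
    · have hv : R.1.mulVec (-(so2Inv R).1.mulVec v) = -v := by
        rw [Matrix.mulVec_neg, mulVec_so2Inv]
      have ha : R.1.mulVec ((so2Inv R).1.mulVec (b • v - a)) = b • v - a :=
        mulVec_so2Inv R _
      simp only [galMul, galOne, Prod.mk.injEq, hv, ha, mul_so2Inv]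
      refine ⟨?_, ?_, trivial, by ring, by abel, by module⟩
      · simp only [dot, Pi.neg_apply, Pi.sub_apply, Pi.smul_apply, smul_eq_mul]
        ring
      · simp only [wedge, Pi.neg_apply]
        ring
    · have hv : (so2Inv R).1.mulVec v = (so2Inv R).1.mulVec v := rfl
      simp only [galMul, galOne, Prod.mk.injEq, so2Inv_mul]
      have h1 : dot (-(so2Inv R).1.mulVec v) ((so2Inv R).1.mulVec v)
          = -dot v v := by
        have := dot_rot (so2Inv R) v v
        simp only [dot, Pi.neg_apply] at *
        linarith [this]
      refine ⟨?_, ?_, trivial, by ring, ?_, ?_⟩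
      · have e1 : dot ((so2Inv R).1.mulVec (b • v - a)) ((so2Inv R).1.mulVec v)
            = dot (b • v - a) v := dot_rot ..
        have e2 : dot (-(so2Inv R).1.mulVec v) ((so2Inv R).1.mulVec a)
            = -dot v a := by
          have := dot_rot (so2Inv R) v a
          simp only [dot, Pi.neg_apply] at *
          linarith [this]
        rw [e1, e2, h1]
        simp only [dot, Pi.sub_apply, Pi.smul_apply, smul_eq_mul]
        ring
      · have := wedge_rot (so2Inv R) v v
        simp only [wedge, Pi.neg_apply] at *
        ring
      · exact neg_add_cancel _
      · simp only [Matrix.mulVec_sub, Matrix.mulVec_smul]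
        module
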